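/- Let f : (0,∞) → (0,∞) be a probability density such that t ↦ log f(e^t) is concave on ℝ. Then for all x, c > 0 with (x−1)(c−1) ≥ 0, one has f(x) f(c/x) ≥ f(1/x) f(cx). -/

import Mathlib

lemma concave_pair {g : ℝ → ℝ} (hg : ConcaveOn ℝ Set.univ g) {u s t v : ℝ}
    (hus : u ≤ s) (hut : u ≤ t) (htv : t ≤ v) (hsum : s + t = u + v) :
    g u + g v ≤ g s + g t := by
  rcases eq_or_lt_of_le (hus.trans (by linarith : s ≤ v)) with h | h
  · have hs : s = u := le_antisymm (by linarith) hus
    have ht : t = v := le_antisymm htv (by linarith)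
    rw [hs, ht]
  · set θ : ℝ := (v - s) / (v - u) with hθ
    have hvu : 0 < v - u := by linarith
    have hθ0 : 0 ≤ θ := div_nonneg (by linarith) (by linarith)
    have hθ1 : θ ≤ 1 := (div_le_one hvu).mpr (by linarith)
    have hsum1 : θ + (1 - θ) = 1 := by ring
    have hs : θ * u + (1 - θ) * v = s := by
      rw [hθ]; field_simp [hvu.ne']
      ring
    have ht : (1 - θ) * u + θ * v = t := by
      have : t = u + v - s := by linarith
      rw [this]
      rw [hθ]; field_simp [hvu.ne']
      ring
    have h1 := hg.2 (Set.mem_univ u) (Set.mem_univ v) hθ0 (by linarith) hsum1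
    have h2 := hg.2 (Set.mem_univ u) (Set.mem_univ v) (by linarith : (0:ℝ) ≤ 1 - θ) hθ0
      (by ring)
    simp only [smul_eq_mul] at h1 h2
    rw [hs] at h1
    rw [ht] at h2
    nlinarith [h1, h2]

theorem HM_subset_P (f : ℝ → ℝ)
    (hpos : ∀ x, 0 < x → 0 < f x)
    (hdens : ∫ x in Set.Ioi (0:ℝ), f x = 1)
    (hconc : ConcaveOn ℝ Set.univ fun t => Real.log (f (Real.exp t))) :
    ∀ x c : ℝ, 0 < x → 0 < c → (x - 1) * (c - 1) ≥ 0 →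
      f (1 / x) * f (c * x) ≤ f x * f (c / x) := by
  intro x c hx hc hxc
  set g : ℝ → ℝ := fun t => Real.log (f (Real.exp t)) with hg
  set a := Real.log x with ha
  set b := Real.log c with hb
  have ea : Real.exp a = x := Real.exp_log hx
  have eb : Real.exp b = c := Real.exp_log hc
  have e1 : Real.exp (-a) = 1 / x := by rw [Real.exp_neg, ea]; ring
  have e2 : Real.exp (b + a) = c * x := by rw [Real.exp_add, ea, eb]
  have e3 : Real.exp (b - a) = c / x := by
    rw [Real.exp_sub, ea, eb]
  have key : g (-a) + g (b + a) ≤ g a + g (b - a) := by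
    rcases mul_nonneg_iff.mp hxc with ⟨h1, h2⟩ | ⟨h1, h2⟩
    · -- x ≥ 1, c ≥ 1, so a ≥ 0, b ≥ 0
      have ha0 : 0 ≤ a := Real.log_nonneg (by linarith)
      have hb0 : 0 ≤ b := Real.log_nonneg (by linarith)
      have := concave_pair hconc (u := -a) (s := a) (t := b - a) (v := b + a)
        (by linarith) (by linarith) (by linarith) (by ring)
      linarith [this]
    · -- x ≤ 1, c ≤ 1, so a ≤ 0, b ≤ 0
      have ha0 : a ≤ 0 := Real.log_nonpos (le_of_lt hx) (by linarith)
      have hb0 : b ≤ 0 := Real.log_nonpos (le_of_lt hc) (by linarith)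
      have := concave_pair hconc (u := a + b) (s := a) (t := b - a) (v := -a)
        (by linarith) (by linarith) (by linarith) (by ring)
      rw [show a + b = b + a from add_comm a b] at this
      linarith [this]
  have hga : g a = Real.log (f x) := by simp only [hg, ea]
  have hg1 : g (-a) = Real.log (f (1 / x)) := by simp only [hg, e1]
  have hg2 : g (b + a) = Real.log (f (c * x)) := by simp only [hg, e2]
  have hg3 : g (b - a) = Real.log (f (c / x)) := by simp only [hg, e3]
  rw [hga, hg1, hg2, hg3] at key
  have p1 : 0 < f (1 / x) := hpos _ (by positivity)
  have p2 : 0 < f (c * x) := hpos _ (by positivity)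
  have p3 : 0 < f x := hpos _ hx
  have p4 : 0 < f (c / x) := hpos _ (by positivity)
  calc f (1 / x) * f (c * x)
      = Real.exp (Real.log (f (1 / x)) + Real.log (f (c * x))) := by
        rw [Real.exp_add, Real.exp_log p1, Real.exp_log p2]
    _ ≤ Real.exp (Real.log (f x) + Real.log (f (c / x))) := Real.exp_le_exp.mpr key
    _ = f x * f (c / x) := by rw [Real.exp_add, Real.exp_log p3, Real.exp_log p4]
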